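/- Let f_{1/2} : ℝ → ℝ ∪ {+∞} be defined by f_{1/2}(λ) := −√λ for λ ≥ 0 and f_{1/2}(λ) := +∞ for λ < 0. Then for positive definite density matrices ρ1 and ρ2 of the same finite size, D_{f_{1/2}}^min(ρ1‖ρ2) = −tr √( ρ2^{1/2} · ρ1 · ρ2^{1/2} ), i.e. the maximized measured f_{1/2}-divergence equals minus the fidelity between ρ1 and ρ2. -/

import Mathlib

open Filter Matrix
open scoped ComplexOrder
open scoped BigOperators

noncomputable section

attribute [local instance] Classical.propDecidable

/-- The effective domain of an extended-real-valued function. -/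
def edom (f : ℝ → EReal) : Set ℝ := {x | f x < ⊤}

/-- The convex conjugate `f*`(t) = sup_λ (t·λ − f(λ)). -/
def econj (f : ℝ → EReal) (t : ℝ) : EReal := ⨆ l : ℝ, ((t * l : ℝ) : EReal) - f l

/-- The function `g` associated to `f`, i.e. the lsc positively homogeneous
extension of `(λ1,λ2) ↦ λ2 f(λ1/λ2)`. -/
def gfun (f : ℝ → EReal) (l1 l2 : ℝ) : EReal :=
  if l1 = 0 ∧ l2 = 0 then 0
  else if l1 ∈ edom f ∧ 0 < l2 then ((l2 : ℝ) : EReal) * f (l1 / l2)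
  else if l1 ∈ edom f ∧ l2 = 0 then
    limUnder (nhdsWithin 0 (Set.Ioi 0)) fun u : ℝ => ((u : ℝ) : EReal) * f (l1 / u)
  else ⊤

/-- A finite-outcome POVM. -/
def IsPOVM {n m : ℕ} (M : Fin m → Matrix (Fin n) (Fin n) ℂ) : Prop :=
  (∀ x, (M x).PosSemidef) ∧ ∑ x, M x = 1

/-- The maximized measured f-divergence `D_f^min`. -/
def Dfmin (f : ℝ → EReal) {n : ℕ} (ρ1 ρ2 : Matrix (Fin n) (Fin n) ℂ) : EReal :=
  ⨆ (m : ℕ) (M : Fin m → Matrix (Fin n) (Fin n) ℂ) (_ : IsPOVM M),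
    ∑ x, gfun f ((ρ1 * M x).trace.re) ((ρ2 * M x).trace.re)

/-- Functional calculus on a Hermitian matrix: apply `h` to the eigenvalues. -/
def hermFC {k : ℕ} (h : ℝ → ℝ) {A : Matrix (Fin k) (Fin k) ℂ} (hA : A.IsHermitian) :
    Matrix (Fin k) (Fin k) ℂ :=
  (hA.eigenvectorUnitary : Matrix (Fin k) (Fin k) ℂ) *
    Matrix.diagonal (fun i => (h (hA.eigenvalues i) : ℂ)) *
    (star (hA.eigenvectorUnitary : Matrix (Fin k) (Fin k) ℂ))

/-- The spectrum of the Hermitian matrix `A` is contained in `S`. -/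
def specIn {k : ℕ} {A : Matrix (Fin k) (Fin k) ℂ} (hA : A.IsHermitian) (S : Set ℝ) : Prop :=
  ∀ i, hA.eigenvalues i ∈ S

/-- The Loewner order: `A ≤ B`. -/
def Loewner {k : ℕ} (A B : Matrix (Fin k) (Fin k) ℂ) : Prop := (B - A).PosSemidef

/-- Operator convexity of a real function on a set `S` (midpoint form, via
the functional calculus on Hermitian matrices with spectrum in `S`). -/
def OpConvexOn (h : ℝ → ℝ) (S : Set ℝ) : Prop :=
  ∀ (k : ℕ), 1 ≤ k → ∀ (A B : Matrix (Fin k) (Fin k) ℂ)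
    (hA : A.IsHermitian) (hB : B.IsHermitian) (hM : ((1/2 : ℂ) • (A + B)).IsHermitian),
    specIn hA S → specIn hB S →
    Loewner (hermFC h hM) ((1/2 : ℂ) • (hermFC h hA + hermFC h hB))

/-- The real-valued version of the convex conjugate of `f` (used for the
functional calculus; on `dom f*` it agrees with `f*` when `f` is proper). -/
def econjR (f : ℝ → EReal) (t : ℝ) : ℝ := (econj f t).toReal

/-- Condition (I): `f*` is operator convex on its effective domain. -/
def CondI (f : ℝ → EReal) : Prop := OpConvexOn (econjR f) (edom (econj f))

/-- `f` is a proper lower semicontinuous convex function with `dom f ⊇ (0,∞)`. -/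
structure NiceF (f : ℝ → EReal) : Prop where
  ne_bot : ∀ x, f x ≠ ⊥
  ne_top : ∃ x, f x ≠ ⊤
  lsc : LowerSemicontinuous f
  convex : ∀ x y a b : ℝ, 0 ≤ a → 0 ≤ b → a + b = 1 →
    f (a * x + b * y) ≤ ((a : ℝ) : EReal) * f x + ((b : ℝ) : EReal) * f y
  dom : Set.Ioi (0 : ℝ) ⊆ edom f

/-- `f_{1/2}(λ) = −√λ` for `λ ≥ 0`, `+∞` for `λ < 0`. -/
def fhalf : ℝ → EReal := fun l => if 0 ≤ l then ((-Real.sqrt l : ℝ) : EReal) else ⊤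

namespace Matrix.PosSemidef
open scoped MatrixOrder
variable {n : ℕ} {A : Matrix (Fin n) (Fin n) ℂ}
def sqrt (_hA : A.PosSemidef) : Matrix (Fin n) (Fin n) ℂ := CFC.sqrt A
lemma posSemidef_sqrt (hA : A.PosSemidef) : hA.sqrt.PosSemidef :=
  Matrix.nonneg_iff_posSemidef.1 (CFC.sqrt_nonneg A)
lemma sqrt_mul_self (hA : A.PosSemidef) : hA.sqrt * hA.sqrt = A :=
  CFC.sqrt_mul_sqrt_self A hA.nonneg
end Matrix.PosSemidef

section Helpers
variable {n : ℕ}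

lemma gfun_fhalf {p q : ℝ} (hp : 0 ≤ p) (hq : 0 ≤ q) (h : q = 0 → p = 0) :
    gfun fhalf p q = ((-Real.sqrt (p * q) : ℝ) : EReal) := by
  rcases eq_or_lt_of_le hq with hq0 | hq0
  · have hp0 : p = 0 := h hq0.symm
    simp [gfun, hp0, ← hq0]
  · have hdom : p ∈ edom fhalf := by
      simp [edom, fhalf, hp]
      exact EReal.coe_lt_top _
    rw [gfun, if_neg (by rintro ⟨-, rfl⟩; exact lt_irrefl _ hq0), if_pos ⟨hdom, hq0⟩]
    have hpq : 0 ≤ p / q := div_nonneg hp hq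
    rw [fhalf, if_pos hpq, ← EReal.coe_mul]
    congr 1
    rw [Real.sqrt_div hp q, Real.sqrt_mul hp q, mul_neg, mul_div_assoc',
      mul_comm q (Real.sqrt p), mul_div_assoc, Real.div_sqrt]

lemma ereal_coe_sum {ι : Type*} (s : Finset ι) (f : ι → ℝ) :
    ((∑ i ∈ s, f i : ℝ) : EReal) = ∑ i ∈ s, ((f i : ℝ) : EReal) := by
  induction s using Finset.cons_induction with
  | empty => simp
  | cons a s ha ih => rw [Finset.sum_cons, Finset.sum_cons, EReal.coe_add, ih]


lemma trace_ctm (A : Matrix (Fin n) (Fin n) ℂ) :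
    (Aᴴ * A).trace = (((∑ p : Fin n × Fin n, Complex.normSq (A p.1 p.2)) : ℝ) : ℂ) := by
  simp only [Matrix.trace, Matrix.diag, Matrix.mul_apply, Matrix.conjTranspose_apply]
  push_cast
  rw [Fintype.sum_prod_type, Finset.sum_comm]
  apply Finset.sum_congr rfl; intro j _
  apply Finset.sum_congr rfl; intro i _
  exact (Complex.normSq_eq_conj_mul_self).symm

lemma trace_ctm_re_nonneg (A : Matrix (Fin n) (Fin n) ℂ) : 0 ≤ (Aᴴ * A).trace.re := by
  rw [trace_ctm, Complex.ofReal_re]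
  exact Finset.sum_nonneg fun p _ => Complex.normSq_nonneg _

lemma eq_zero_of_trace_ctm (A : Matrix (Fin n) (Fin n) ℂ) (h : (Aᴴ * A).trace.re = 0) :
    A = 0 := by
  rw [trace_ctm, Complex.ofReal_re] at h
  have := (Finset.sum_eq_zero_iff_of_nonneg (fun p _ => Complex.normSq_nonneg (A p.1 p.2))).1 h
  ext i j
  simpa using Complex.normSq_eq_zero.1 (this (i, j) (Finset.mem_univ _))

/-- tr(ρ M) = tr(Cᴴ C) with C = √ρ √M -/
lemma trace_mul_psd {ρ M : Matrix (Fin n) (Fin n) ℂ} (hρ : ρ.PosSemidef) (hM : M.PosSemidef) :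
    (ρ * M).trace =
      ((hρ.sqrt * hM.sqrt)ᴴ * (hρ.sqrt * hM.sqrt)).trace := by
  have h1 : (hρ.sqrt * hM.sqrt)ᴴ * (hρ.sqrt * hM.sqrt) = hM.sqrt * ρ * hM.sqrt := by
    rw [Matrix.conjTranspose_mul, hρ.posSemidef_sqrt.isHermitian.eq,
      hM.posSemidef_sqrt.isHermitian.eq]
    rw [Matrix.mul_assoc, ← Matrix.mul_assoc hρ.sqrt, hρ.sqrt_mul_self, ← Matrix.mul_assoc]
  rw [h1, Matrix.trace_mul_cycle, hM.sqrt_mul_self, Matrix.trace_mul_comm]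

lemma trace_mul_psd_re_nonneg {ρ M : Matrix (Fin n) (Fin n) ℂ} (hρ : ρ.PosSemidef)
    (hM : M.PosSemidef) : 0 ≤ (ρ * M).trace.re := by
  rw [trace_mul_psd hρ hM]; exact trace_ctm_re_nonneg _

lemma psd_eq_zero_of_trace {ρ M : Matrix (Fin n) (Fin n) ℂ} (hρ : ρ.PosDef)
    (hM : M.PosSemidef) (h : (ρ * M).trace.re = 0) : M = 0 := by
  rw [trace_mul_psd hρ.posSemidef hM] at h
  have h0 := eq_zero_of_trace_ctm _ h
  have hRu : IsUnit hρ.posSemidef.sqrt.det := by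
    have : hρ.posSemidef.sqrt.det * hρ.posSemidef.sqrt.det = ρ.det := by
      rw [← Matrix.det_mul, hρ.posSemidef.sqrt_mul_self]
    have hd := hρ.det_pos
    refine isUnit_iff_ne_zero.2 fun hz => ?_
    rw [hz, zero_mul] at this
    rw [← this] at hd
    exact lt_irrefl _ hd
  have hT : hM.sqrt = 0 := by
    have := congrArg (fun B => hρ.posSemidef.sqrt⁻¹ * B) h0
    simpa [← Matrix.mul_assoc, Matrix.nonsing_inv_mul _ hRu] using this
  rw [← hM.sqrt_mul_self, hT, Matrix.mul_zero]


lemma trace_ctm2 (A B : Matrix (Fin n) (Fin n) ℂ) :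
    (Aᴴ * B).trace = ∑ p : Fin n × Fin n, (starRingEnd ℂ) (A p.1 p.2) * B p.1 p.2 := by
  simp only [Matrix.trace, Matrix.diag, Matrix.mul_apply, Matrix.conjTranspose_apply]
  rw [Fintype.sum_prod_type, Finset.sum_comm]
  rfl

lemma trace_ctm_norm (A : Matrix (Fin n) (Fin n) ℂ) :
    (Aᴴ * A).trace.re = ∑ p : Fin n × Fin n, ‖A p.1 p.2‖ ^ 2 := by
  rw [trace_ctm, Complex.ofReal_re]
  exact Finset.sum_congr rfl fun p _ => by rw [Complex.normSq_eq_norm_sq]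

lemma trace_cs (A B : Matrix (Fin n) (Fin n) ℂ) :
    ‖(Aᴴ * B).trace‖ ≤
      Real.sqrt ((Aᴴ * A).trace.re) * Real.sqrt ((Bᴴ * B).trace.re) := by
  let x : EuclideanSpace ℂ (Fin n × Fin n) := WithLp.toLp 2 (fun p : Fin n × Fin n => A p.1 p.2)
  let y : EuclideanSpace ℂ (Fin n × Fin n) := WithLp.toLp 2 (fun p : Fin n × Fin n => B p.1 p.2)
  have hxy : (Aᴴ * B).trace = inner ℂ x y := by
    rw [trace_ctm2, PiLp.inner_apply]
    simp [x, y, RCLike.inner_apply, mul_comm]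
  have hx : Real.sqrt ((Aᴴ * A).trace.re) = ‖x‖ := by
    rw [EuclideanSpace.norm_eq, trace_ctm_norm]
  have hy : Real.sqrt ((Bᴴ * B).trace.re) = ‖y‖ := by
    rw [EuclideanSpace.norm_eq, trace_ctm_norm]
  rw [hxy, hx, hy]
  exact norm_inner_le_norm x y


lemma upper_bound {m : ℕ} {ρ1 ρ2 S F : Matrix (Fin n) (Fin n) ℂ}
    (h1 : ρ1.PosDef) (h2 : ρ2.PosDef) (hS : S.PosSemidef) (hS2 : S * S = ρ2)
    (hF : F.PosSemidef) (hF2 : F * F = S * ρ1 * S)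
    (M : Fin m → Matrix (Fin n) (Fin n) ℂ) (hMp : ∀ x, (M x).PosSemidef)
    (hM1 : ∑ x, M x = 1) :
    F.trace.re ≤ ∑ x, Real.sqrt ((ρ1 * M x).trace.re * (ρ2 * M x).trace.re) := by
  have hdS : IsUnit S.det := by
    refine isUnit_iff_ne_zero.2 fun hz => ?_
    have : S.det * S.det = ρ2.det := by rw [← Matrix.det_mul, hS2]
    rw [hz, zero_mul] at this
    exact absurd (this ▸ h2.det_pos) (lt_irrefl _)
  have hdF : IsUnit F.det := by
    refine isUnit_iff_ne_zero.2 fun hz => ?_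
    have : F.det * F.det = S.det * ρ1.det * S.det := by
      rw [← Matrix.det_mul, hF2, Matrix.det_mul, Matrix.det_mul]
    rw [hz, zero_mul] at this
    have h1d := h1.det_pos
    have hSd : S.det ≠ 0 := hdS.ne_zero
    exact hSd (by
      have := this.symm
      rcases mul_eq_zero.1 this with h | h
      · rcases mul_eq_zero.1 h with h' | h'
        · exact h'
        · exact absurd h' (ne_of_gt h1d)
      · exact h)
  set R := h1.posSemidef.sqrt with hRdef
  have hRR : R * R = ρ1 := h1.posSemidef.sqrt_mul_self
  have hRH : Rᴴ = R := h1.posSemidef.posSemidef_sqrt.isHermitian.eq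
  have hSH : Sᴴ = S := hS.isHermitian.eq
  have hFH : Fᴴ = F := hF.isHermitian.eq
  set V := R * S * F⁻¹ with hVdef
  have hVH : Vᴴ = F⁻¹ * (S * R) := by
    rw [hVdef, Matrix.conjTranspose_mul, Matrix.conjTranspose_mul,
      Matrix.conjTranspose_nonsing_inv, hFH, hRH, hSH]
  have hVRS : Vᴴ * (R * S) = F := by
    have e : F⁻¹ * (S * R) * (R * S) = F⁻¹ * (F * F) := by
      calc F⁻¹ * (S * R) * (R * S) = F⁻¹ * (S * (R * R) * S) := by noncomm_ring
      _ = F⁻¹ * (F * F) := by rw [hRR, hF2]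
    rw [hVH, e, ← Matrix.mul_assoc, Matrix.nonsing_inv_mul F hdF, Matrix.one_mul]
  have hVV : Vᴴ * V = 1 := by
    rw [hVdef, ← Matrix.mul_assoc, hVRS, Matrix.mul_nonsing_inv F hdF]
  have hVVt : V * Vᴴ = 1 := mul_eq_one_comm.mp hVV
  have key : F.trace = ∑ x, (Vᴴ * R * M x * S).trace := by
    rw [← Matrix.trace_sum]
    congr 1
    calc F = Vᴴ * (R * S) := hVRS.symm
    _ = Vᴴ * R * (∑ x, M x) * S := by rw [hM1, Matrix.mul_one, Matrix.mul_assoc]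
    _ = ∑ x, Vᴴ * R * M x * S := by rw [Finset.mul_sum, Finset.sum_mul]
  have hx : ∀ x, (Vᴴ * R * M x * S).trace.re ≤
      Real.sqrt ((ρ1 * M x).trace.re * (ρ2 * M x).trace.re) := by
    intro x
    set T := (hMp x).sqrt with hTdef
    have hTT : T * T = M x := (hMp x).sqrt_mul_self
    have hTH : Tᴴ = T := (hMp x).posSemidef_sqrt.isHermitian.eq
    set A' := T * R * V with hA'def
    set B' := T * S with hB'def
    have hAH : A'ᴴ = Vᴴ * (R * T) := by
      rw [hA'def, Matrix.conjTranspose_mul (T * R) V, Matrix.conjTranspose_mul T R, hRH, hTH]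
    have hab : A'ᴴ * B' = Vᴴ * R * M x * S := by
      rw [hAH, hB'def, ← hTT]; noncomm_ring
    have haa : (A'ᴴ * A').trace = (ρ1 * M x).trace := by
      rw [hAH, hA'def]
      have e1 : Vᴴ * (R * T) * (T * R * V) = Vᴴ * ((R * (M x) * R) * V) := by
        rw [← hTT]
        noncomm_ring
      rw [e1, Matrix.trace_mul_comm, Matrix.mul_assoc, hVVt, Matrix.mul_one,
        Matrix.trace_mul_cycle, hRR]
    have hbb : (B'ᴴ * B').trace = (ρ2 * M x).trace := by
      rw [hB'def, Matrix.conjTranspose_mul, hTH, hSH]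
      have e1 : S * T * (T * S) = S * (M x) * S := by rw [← hTT]; noncomm_ring
      rw [e1, Matrix.trace_mul_cycle, hS2]
    calc (Vᴴ * R * M x * S).trace.re ≤ ‖(Vᴴ * R * M x * S).trace‖ :=
          Complex.re_le_norm _
    _ = ‖(A'ᴴ * B').trace‖ := by rw [hab]
    _ ≤ Real.sqrt ((A'ᴴ * A').trace.re) * Real.sqrt ((B'ᴴ * B').trace.re) := trace_cs _ _
    _ = Real.sqrt ((ρ1 * M x).trace.re) * Real.sqrt ((ρ2 * M x).trace.re) := by
          rw [haa, hbb]
    _ = Real.sqrt ((ρ1 * M x).trace.re * (ρ2 * M x).trace.re) :=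
          (Real.sqrt_mul (trace_mul_psd_re_nonneg h1.posSemidef (hMp x)) _).symm
  calc F.trace.re = ∑ x, (Vᴴ * R * M x * S).trace.re := by
        rw [key, Complex.re_sum]
  _ ≤ _ := Finset.sum_le_sum fun x _ => hx x


lemma trace_mul_diag_single (B : Matrix (Fin n) (Fin n) ℂ) (x : Fin n) :
    (B * Matrix.diagonal (fun i => if i = x then (1:ℂ) else 0)).trace = B x x := by
  simp only [Matrix.trace, Matrix.diag, Matrix.mul_diagonal]
  simp [Finset.sum_ite_eq']

lemma trace_diag_mul (f : Fin n → ℂ) (B : Matrix (Fin n) (Fin n) ℂ) :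
    (Matrix.diagonal f * B).trace = ∑ i, f i * B i i := by
  simp only [Matrix.trace, Matrix.diag, Matrix.diagonal_mul]

set_option maxHeartbeats 1000000 in
lemma achieve {ρ1 ρ2 S F : Matrix (Fin n) (Fin n) ℂ}
    (h1 : ρ1.PosDef) (h2 : ρ2.PosDef) (hS : S.PosSemidef) (hS2 : S * S = ρ2)
    (hF : F.PosSemidef) (hF2 : F * F = S * ρ1 * S) :
    ∃ M : Fin n → Matrix (Fin n) (Fin n) ℂ,
      (∀ x, (M x).PosSemidef) ∧ (∑ x, M x = 1) ∧
      (∀ x, (ρ2 * M x).trace.re = 0 → (ρ1 * M x).trace.re = 0) ∧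
      ∑ x, Real.sqrt ((ρ1 * M x).trace.re * (ρ2 * M x).trace.re) = F.trace.re := by
  have hSH : Sᴴ = S := hS.isHermitian.eq
  have hdS : IsUnit S.det := by
    refine isUnit_iff_ne_zero.2 fun hz => ?_
    have : S.det * S.det = ρ2.det := by rw [← Matrix.det_mul, hS2]
    rw [hz, zero_mul] at this
    exact absurd (this ▸ h2.det_pos) (lt_irrefl _)
  have hSi : S⁻¹ * S = 1 := Matrix.nonsing_inv_mul S hdS
  have hSi' : S * S⁻¹ = 1 := Matrix.mul_nonsing_inv S hdS
  set O := S⁻¹ * F * S⁻¹ with hOdef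
  have hOps : O.PosSemidef := by
    have h := hF.conjTranspose_mul_mul_same (B := S⁻¹)
    rwa [Matrix.conjTranspose_nonsing_inv, hSH] at h
  have hOH : O.IsHermitian := hOps.isHermitian
  set U : Matrix (Fin n) (Fin n) ℂ := (hOH.eigenvectorUnitary : Matrix (Fin n) (Fin n) ℂ)
    with hUdef
  set d : Fin n → ℝ := hOH.eigenvalues with hddef
  set Dd : Matrix (Fin n) (Fin n) ℂ := Matrix.diagonal (RCLike.ofReal ∘ d) with hDddef
  have hU1 : U * star U = 1 := (Matrix.mem_unitaryGroup_iff).mp hOH.eigenvectorUnitary.2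
  have hU2 : star U * U = 1 := (Matrix.mem_unitaryGroup_iff').mp hOH.eigenvectorUnitary.2
  have hspec : star U * O * U = Dd := by
    have h := hOH.conjStarAlgAut_star_eigenvectorUnitary
    rw [Unitary.conjStarAlgAut_star_apply] at h
    exact h
  have hspec2 : O = U * Dd * star U := by
    have h := hOH.spectral_theorem
    rw [Unitary.conjStarAlgAut_apply] at h
    exact h
  set D : Fin n → Matrix (Fin n) (Fin n) ℂ :=
    fun x => Matrix.diagonal (fun i => if i = x then (1:ℂ) else 0) with hDdef
  have htr : ∀ (ρ : Matrix (Fin n) (Fin n) ℂ) (x : Fin n),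
      (ρ * (U * D x * star U)).trace = (star U * ρ * U) x x := by
    intro ρ x
    have e : ρ * (U * D x * star U) = (ρ * U) * D x * star U := by noncomm_ring
    rw [e, Matrix.trace_mul_cycle, ← Matrix.mul_assoc, ← trace_mul_diag_single
      (star U * ρ * U) x, hDdef]
  have hO2 : O * ρ2 * O = ρ1 := by
    rw [← hS2]
    calc O * (S * S) * O = S⁻¹ * F * (S⁻¹ * S) * (S * S⁻¹) * F * S⁻¹ := by
          rw [hOdef]; noncomm_ring
    _ = S⁻¹ * (F * F) * S⁻¹ := by rw [hSi, hSi']; noncomm_ring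
    _ = (S⁻¹ * S) * ρ1 * (S * S⁻¹) := by rw [hF2]; noncomm_ring
    _ = ρ1 := by rw [hSi, hSi', Matrix.one_mul, Matrix.mul_one]
  have hA1 : star U * ρ1 * U = Dd * (star U * ρ2 * U) * Dd := by
    rw [← hO2]
    calc star U * (O * ρ2 * O) * U
        = (star U * O * U) * (star U * ρ2 * U) * (star U * O * U) := by
          have e : (star U * O * U) * (star U * ρ2 * U) * (star U * O * U)
              = star U * O * (U * star U) * ρ2 * (U * star U) * O * U := by noncomm_ring
          rw [e, hU1]; noncomm_ring
    _ = Dd * (star U * ρ2 * U) * Dd := by rw [hspec]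
  have hqr : ∀ x, (ρ1 * (U * D x * star U)).trace.re =
      d x ^ 2 * (ρ2 * (U * D x * star U)).trace.re := by
    intro x
    rw [htr ρ1 x, htr ρ2 x, hA1]
    have e : (Dd * (star U * ρ2 * U) * Dd) x x
        = ((d x : ℂ)) * (star U * ρ2 * U) x x * ((d x : ℂ)) := by
      rw [hDddef, Matrix.mul_diagonal, Matrix.diagonal_mul]
      rfl
    rw [e]
    have : ((d x : ℂ)) * (star U * ρ2 * U) x x * ((d x : ℂ))
        = ((d x ^ 2 : ℝ) : ℂ) * (star U * ρ2 * U) x x := by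
      push_cast; ring
    rw [this, Complex.re_ofReal_mul]
  refine ⟨fun x => U * D x * star U, ?_, ?_, ?_, ?_⟩
  · intro x
    have hD : (D x).PosSemidef := by
      refine Matrix.PosSemidef.diagonal ?_
      intro i
      dsimp only
      split
      · exact zero_le_one
      · exact le_refl 0
    have := hD.mul_mul_conjTranspose_same (B := U)
    rwa [← Matrix.star_eq_conjTranspose] at this
  · have hsumD : ∑ x, D x = 1 := by
      ext i j
      simp only [Matrix.sum_apply]
      by_cases h : i = j
      · subst h; simp [hDdef, Matrix.diagonal_apply, Matrix.one_apply]
      · simp [hDdef, Matrix.diagonal_apply, h, Matrix.one_apply]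
    calc ∑ x, U * D x * star U = U * (∑ x, D x) * star U := by
          rw [Finset.mul_sum, Finset.sum_mul]
    _ = 1 := by rw [hsumD, Matrix.mul_one, hU1]
  · intro x hq0
    rw [hqr x, hq0, mul_zero]
  · have hMps : ∀ x, (U * D x * star U).PosSemidef := by
      intro x
      have hD : (D x).PosSemidef := by
        refine Matrix.PosSemidef.diagonal ?_
        intro i
        dsimp only
        split
        · exact zero_le_one
        · exact le_refl 0
      have := hD.mul_mul_conjTranspose_same (B := U)
      rwa [← Matrix.star_eq_conjTranspose] at this
    have hd0 : ∀ x, 0 ≤ d x := fun x => hOps.eigenvalues_nonneg x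
    have hq0 : ∀ x, 0 ≤ (ρ2 * (U * D x * star U)).trace.re := fun x =>
      trace_mul_psd_re_nonneg h2.posSemidef (hMps x)
    have hsqrt : ∀ x, Real.sqrt ((ρ1 * (U * D x * star U)).trace.re *
        (ρ2 * (U * D x * star U)).trace.re)
        = d x * (ρ2 * (U * D x * star U)).trace.re := by
      intro x
      rw [hqr x]
      have e : d x ^ 2 * (ρ2 * (U * D x * star U)).trace.re *
          (ρ2 * (U * D x * star U)).trace.re
          = (d x * (ρ2 * (U * D x * star U)).trace.re) ^ 2 := by ring
      rw [e, Real.sqrt_sq (mul_nonneg (hd0 x) (hq0 x))]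
    have hFtr : F.trace = ∑ x, (d x : ℂ) * (star U * ρ2 * U) x x := by
      have hFS : F = S * O * S := by
        calc F = (S * S⁻¹) * F * (S⁻¹ * S) := by
              rw [hSi, hSi', Matrix.one_mul, Matrix.mul_one]
        _ = S * O * S := by rw [hOdef]; noncomm_ring
      calc F.trace = (O * ρ2).trace := by
            rw [hFS, Matrix.trace_mul_cycle, hS2, Matrix.trace_mul_comm]
      _ = (Dd * (star U * ρ2 * U)).trace := by
            rw [hspec2]
            calc (U * Dd * star U * ρ2).trace
                = ((U * Dd) * (star U * ρ2)).trace := by congr 1; noncomm_ring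
            _ = ((star U * ρ2) * (U * Dd)).trace := Matrix.trace_mul_comm _ _
            _ = ((star U * ρ2 * U) * Dd).trace := by congr 1; noncomm_ring
            _ = (Dd * (star U * ρ2 * U)).trace := Matrix.trace_mul_comm _ _
      _ = ∑ x, (d x : ℂ) * (star U * ρ2 * U) x x := by
            rw [hDddef, trace_diag_mul]
            rfl
    calc ∑ x, Real.sqrt ((ρ1 * (U * D x * star U)).trace.re *
          (ρ2 * (U * D x * star U)).trace.re)
        = ∑ x, d x * (ρ2 * (U * D x * star U)).trace.re := by
          exact Finset.sum_congr rfl fun x _ => hsqrt x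
    _ = ∑ x, ((d x : ℂ) * (star U * ρ2 * U) x x).re := by
          refine Finset.sum_congr rfl fun x _ => ?_
          rw [htr ρ2 x, Complex.re_ofReal_mul]
    _ = F.trace.re := by rw [hFtr, Complex.re_sum]

end Helpers

/-- the maximized measured `f_{1/2}`-divergence equals minus the
fidelity: `D_{f_{1/2}}^min(ρ1‖ρ2) = −tr √(√ρ2 ρ1 √ρ2)` (here `S = √ρ2` and
`F = √(S ρ1 S)` are the positive semidefinite square roots). -/
theorem stmt_14 {n : ℕ} (ρ1 ρ2 : Matrix (Fin n) (Fin n) ℂ)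
    (h1 : ρ1.PosDef) (h1t : ρ1.trace = 1) (h2 : ρ2.PosDef) (h2t : ρ2.trace = 1)
    (S : Matrix (Fin n) (Fin n) ℂ) (hS : S.PosSemidef) (hS2 : S * S = ρ2)
    (F : Matrix (Fin n) (Fin n) ℂ) (hF : F.PosSemidef) (hF2 : F * F = S * ρ1 * S) :
    Dfmin fhalf ρ1 ρ2 = ((-(F.trace.re) : ℝ) : EReal) := by
  have key : ∀ (m : ℕ) (M : Fin m → Matrix (Fin n) (Fin n) ℂ), IsPOVM M →
      (∑ x, gfun fhalf ((ρ1 * M x).trace.re) ((ρ2 * M x).trace.re))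
        = ((-(∑ x, Real.sqrt ((ρ1 * M x).trace.re * (ρ2 * M x).trace.re)) : ℝ) : EReal) := by
    intro m M hM
    have hterm : ∀ x, gfun fhalf ((ρ1 * M x).trace.re) ((ρ2 * M x).trace.re)
        = ((-(Real.sqrt ((ρ1 * M x).trace.re * (ρ2 * M x).trace.re)) : ℝ) : EReal) := by
      intro x
      refine gfun_fhalf (trace_mul_psd_re_nonneg h1.posSemidef (hM.1 x))
        (trace_mul_psd_re_nonneg h2.posSemidef (hM.1 x)) (fun hq => ?_)
      have hMz : M x = 0 := psd_eq_zero_of_trace h2 (hM.1 x) hq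
      rw [hMz, Matrix.mul_zero, Matrix.trace_zero, Complex.zero_re]
    calc (∑ x, gfun fhalf ((ρ1 * M x).trace.re) ((ρ2 * M x).trace.re))
        = ∑ x, ((-(Real.sqrt ((ρ1 * M x).trace.re * (ρ2 * M x).trace.re)) : ℝ) : EReal) :=
          Finset.sum_congr rfl fun x _ => hterm x
    _ = ((∑ x, -(Real.sqrt ((ρ1 * M x).trace.re * (ρ2 * M x).trace.re)) : ℝ) : EReal) :=
          (ereal_coe_sum _ _).symm
    _ = ((-(∑ x, Real.sqrt ((ρ1 * M x).trace.re * (ρ2 * M x).trace.re)) : ℝ) : EReal) := by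
          rw [← Finset.sum_neg_distrib]
  refine le_antisymm ?_ ?_
  · refine iSup_le fun m => iSup_le fun M => iSup_le fun hM => ?_
    rw [key m M hM, EReal.coe_le_coe_iff]
    exact neg_le_neg (upper_bound h1 h2 hS hS2 hF hF2 M hM.1 hM.2)
  · obtain ⟨M, hMp, hM1, _, hsum⟩ := achieve h1 h2 hS hS2 hF hF2
    have hpovm : IsPOVM M := ⟨hMp, hM1⟩
    refine le_iSup_of_le n (le_iSup_of_le M (le_iSup_of_le hpovm (le_of_eq ?_)))
    rw [key n M hpovm, hsum]
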